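/- Let H be the d×d orthonormal Walsh–Hadamard matrix (d a power of 2) and D' a random diagonal matrix with i.i.d. Rademacher (±1 with probability 1/2) diagonal entries. There is a universal constant C > 0 such that for any unit vector x ∈ R^d and any integer p ≥ 1, E(‖H D' x‖₄^{4p}) ≤ C^{2p+2} · d^{−p} · (2p+2)^{p+1}. -/

import Mathlib

open Real Finset
open scoped Nat

/-- The sign `±1` associated to a Boolean. -/
def sgn (b : Bool) : ℝ := if b then 1 else -1

/-- The `d × d` orthonormal Walsh–Hadamard matrix for `d = 2^n`. -/
noncomputable def WH (n : ℕ) : Matrix (Fin (2 ^ n)) (Fin (2 ^ n)) ℝ := fun i j =>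
  (Real.sqrt (2 ^ n))⁻¹ *
    (-1 : ℝ) ^ (∑ b ∈ Finset.range n, ((i : ℕ).testBit b).toNat * ((j : ℕ).testBit b).toNat)

lemma sgn_sq (b : Bool) : sgn b ^ 2 = 1 := by cases b <;> simp [sgn]

lemma sgn_not (b : Bool) : sgn (!b) = - sgn b := by cases b <;> simp [sgn]

/-- Sum over the Boolean cube of an odd power of one sign times a function not
depending on that coordinate vanishes. -/
lemma sum_flip_odd {ι : Type*} [Fintype ι] [DecidableEq ι] (j : ι)
    (G : (ι → Bool) → ℝ) (hG : ∀ ε b, G (Function.update ε j b) = G ε)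
    {k : ℕ} (hk : Odd k) :
    ∑ ε : ι → Bool, sgn (ε j) ^ k * G ε = 0 := by
  apply Finset.sum_ninvolution (g := fun ε => Function.update ε j (!(ε j)))
  · intro ε
    rw [Function.update_self, sgn_not, hk.neg_pow, hG]
    ring
  · intro ε _ h
    have := congrFun h j
    rw [Function.update_self] at this
    simp at this
  · intro ε; exact Finset.mem_univ _
  · intro ε
    rw [Function.update_self, Function.update_idem, Bool.not_not,
      Function.update_eq_self]

/-- Dropping the odd-indexed terms in a sum over `range (2q+1)`. -/
lemma sum_range_even (q : ℕ) (F : ℕ → ℝ) (h : ∀ k, Odd k → F k = 0) :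
    ∑ k ∈ Finset.range (2 * q + 1), F k = ∑ m ∈ Finset.range (q + 1), F (2 * m) := by
  induction q with
  | zero => simp
  | succ q ih =>
    rw [show 2 * (q + 1) + 1 = (2 * q + 1) + 1 + 1 by ring, Finset.sum_range_succ,
      Finset.sum_range_succ, ih, h (2 * q + 1) ⟨q, by ring⟩,
      show 2 * q + 1 + 1 = 2 * (q + 1) by ring,
      Finset.sum_range_succ (fun m => F (2 * m)) (q + 1)]
    ring

lemma fact_two_mul (m : ℕ) : (2 * m)! = 2 ^ m * m ! * (2 * m - 1)‼ := by
  induction m with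
  | zero => simp
  | succ m ih =>
    have hdf : (2 * m + 1)‼ = (2 * m + 1) * (2 * m - 1)‼ := by
      cases m with
      | zero => rfl
      | succ m' =>
        rw [show 2 * (m' + 1) + 1 = (2 * m' + 1) + 2 by ring,
          Nat.doubleFactorial_add_two, show 2 * (m' + 1) - 1 = 2 * m' + 1 by omega]
    rw [show 2 * (m + 1) = (2 * m + 1) + 1 by ring, Nat.factorial_succ,
      Nat.factorial_succ, ih, show (2 * m + 1) + 1 - 1 = 2 * m + 1 by omega, hdf,
      Nat.factorial_succ, pow_succ]
    ring

/-- The key combinatorial identity behind the Khintchine induction. -/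
lemma choose_doubleFactorial {q k : ℕ} (h : k ≤ q) :
    (2 * q).choose (2 * k) * (2 * k - 1)‼ * (2 * (q - k) - 1)‼
      = (2 * q - 1)‼ * q.choose k := by
  apply Nat.eq_of_mul_eq_mul_left
    (show 0 < 2 ^ k * k ! * (2 ^ (q - k) * (q - k)!) by positivity)
  have B1 : (2 * q).choose (2 * k) * (2 * k)! * (2 * (q - k))! = (2 * q)! := by
    have := Nat.choose_mul_factorial_mul_factorial
      (show 2 * k ≤ 2 * q by omega)
    rwa [show 2 * q - 2 * k = 2 * (q - k) by omega] at this
  have B2 : q.choose k * k ! * (q - k)! = q ! :=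
    Nat.choose_mul_factorial_mul_factorial h
  calc 2 ^ k * k ! * (2 ^ (q - k) * (q - k)!) *
        ((2 * q).choose (2 * k) * (2 * k - 1)‼ * (2 * (q - k) - 1)‼)
      = (2 * q).choose (2 * k) * (2 ^ k * k ! * (2 * k - 1)‼) *
          (2 ^ (q - k) * (q - k)! * (2 * (q - k) - 1)‼) := by ring
    _ = (2 * q).choose (2 * k) * (2 * k)! * (2 * (q - k))! := by
          rw [← fact_two_mul, ← fact_two_mul]
    _ = (2 * q)! := B1
    _ = 2 ^ q * q ! * (2 * q - 1)‼ := fact_two_mul q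
    _ = (2 ^ k * 2 ^ (q - k)) * (q.choose k * k ! * (q - k)!) * (2 * q - 1)‼ := by
          rw [← pow_add, show k + (q - k) = q by omega, B2]
    _ = 2 ^ k * k ! * (2 ^ (q - k) * (q - k)!) * ((2 * q - 1)‼ * q.choose k) := by
          ring

/-- Discrete Khintchine inequality over the Boolean cube, with the double
factorial constant. -/
lemma khintchine {ι : Type*} [Fintype ι] [DecidableEq ι] (a : ι → ℝ) (s : Finset ι) :
    ∀ q : ℕ, ∑ ε : ι → Bool, (∑ j ∈ s, sgn (ε j) * a j) ^ (2 * q)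
      ≤ (2 ^ Fintype.card ι : ℝ) * (2 * q - 1)‼ * (∑ j ∈ s, a j ^ 2) ^ q := by
  classical
  induction s using Finset.induction_on with
  | empty =>
    intro q
    rcases Nat.eq_zero_or_pos q with hq | hq
    · subst hq
      simp [Fintype.card_fun]
    · have h1 : ∑ ε : ι → Bool, (∑ j ∈ (∅ : Finset ι), sgn (ε j) * a j) ^ (2 * q) = 0 := by
        simp [zero_pow (show 2 * q ≠ 0 by omega)]
      rw [h1]
      positivity
  | @insert j t hj ih =>
    intro q
    set S : (ι → Bool) → ℝ := fun ε => ∑ j' ∈ t, sgn (ε j') * a j' with hS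
    set A := ∑ j' ∈ t, a j' ^ 2 with hA
    have hSupd : ∀ (ε : ι → Bool) (b : Bool), S (Function.update ε j b) = S ε := by
      intro ε b
      refine Finset.sum_congr rfl fun j' hj' => ?_
      rw [Function.update_of_ne (ne_of_mem_of_not_mem hj' hj)]
    have hApos : 0 ≤ A := Finset.sum_nonneg fun _ _ => sq_nonneg _
    have key : ∑ ε : ι → Bool, (∑ j' ∈ insert j t, sgn (ε j') * a j') ^ (2 * q)
        = ∑ m ∈ Finset.range (q + 1),
            ((2 * q).choose (2 * m) : ℝ) * (a j ^ 2) ^ m *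
              ∑ ε : ι → Bool, S ε ^ (2 * (q - m)) := by
      have e1 : ∀ ε : ι → Bool,
          (∑ j' ∈ insert j t, sgn (ε j') * a j') ^ (2 * q)
            = ∑ k ∈ Finset.range (2 * q + 1),
                (sgn (ε j) * a j) ^ k * S ε ^ (2 * q - k) * ((2 * q).choose k) := by
        intro ε
        rw [Finset.sum_insert hj, add_pow]
      rw [Finset.sum_congr rfl fun ε _ => e1 ε, Finset.sum_comm]
      have e2 : ∀ k ∈ Finset.range (2 * q + 1),
          ∑ ε : ι → Bool, (sgn (ε j) * a j) ^ k * S ε ^ (2 * q - k) * ((2 * q).choose k)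
            = ((2 * q).choose k : ℝ) * a j ^ k *
                ∑ ε : ι → Bool, sgn (ε j) ^ k * S ε ^ (2 * q - k) := by
        intro k _
        rw [Finset.mul_sum]
        refine Finset.sum_congr rfl fun ε _ => ?_
        rw [mul_pow]; ring
      rw [Finset.sum_congr rfl e2]
      rw [sum_range_even q _ (fun k hk => by
        rw [sum_flip_odd j (fun ε => S ε ^ (2 * q - k))
          (fun ε b => by
            show S (Function.update ε j b) ^ (2 * q - k) = S ε ^ (2 * q - k)
            rw [hSupd]) hk, mul_zero])]
      refine Finset.sum_congr rfl fun m hm => ?_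
      have hmq : m ≤ q := by
        have := Finset.mem_range.mp hm; omega
      have e3 : ∀ ε : ι → Bool, sgn (ε j) ^ (2 * m) * S ε ^ (2 * q - 2 * m)
          = S ε ^ (2 * (q - m)) := by
        intro ε
        rw [pow_mul, sgn_sq, one_pow, one_mul,
          show 2 * q - 2 * m = 2 * (q - m) by omega]
      rw [Finset.sum_congr rfl fun ε _ => e3 ε, pow_mul]
    rw [key, Finset.sum_insert hj]
    have step1 : ∑ m ∈ Finset.range (q + 1),
          ((2 * q).choose (2 * m) : ℝ) * (a j ^ 2) ^ m *
            ∑ ε : ι → Bool, S ε ^ (2 * (q - m))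
        ≤ ∑ m ∈ Finset.range (q + 1),
            ((2 * q).choose (2 * m) : ℝ) * (a j ^ 2) ^ m *
              ((2 ^ Fintype.card ι : ℝ) * (2 * (q - m) - 1)‼ * A ^ (q - m)) := by
      refine Finset.sum_le_sum fun m _ => ?_
      exact mul_le_mul_of_nonneg_left (ih (q - m))
        (by positivity)
    have step2 : ∑ m ∈ Finset.range (q + 1),
          ((2 * q).choose (2 * m) : ℝ) * (a j ^ 2) ^ m *
            ((2 ^ Fintype.card ι : ℝ) * (2 * (q - m) - 1)‼ * A ^ (q - m))
        ≤ ∑ m ∈ Finset.range (q + 1),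
            (2 ^ Fintype.card ι : ℝ) * (2 * q - 1)‼ *
              ((q.choose m : ℝ) * (a j ^ 2) ^ m * A ^ (q - m)) := by
      refine Finset.sum_le_sum fun m hm => ?_
      have hmq : m ≤ q := by have := Finset.mem_range.mp hm; omega
      have hnat : ((2 * q).choose (2 * m) : ℝ) * (2 * (q - m) - 1)‼
          ≤ ((2 * q - 1)‼ : ℝ) * q.choose m := by
        have h1 : (2 * q).choose (2 * m) * (2 * (q - m) - 1)‼
            ≤ (2 * q - 1)‼ * q.choose m := by
          calc (2 * q).choose (2 * m) * (2 * (q - m) - 1)‼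
              ≤ (2 * q).choose (2 * m) * (2 * m - 1)‼ * (2 * (q - m) - 1)‼ :=
                Nat.mul_le_mul_right _
                  (Nat.le_mul_of_pos_right _ (Nat.doubleFactorial_pos _))
            _ = (2 * q - 1)‼ * q.choose m := choose_doubleFactorial hmq
        exact_mod_cast Nat.cast_le.mpr h1
      have hrest : (0 : ℝ) ≤ (a j ^ 2) ^ m * A ^ (q - m) := by positivity
      calc ((2 * q).choose (2 * m) : ℝ) * (a j ^ 2) ^ m *
            ((2 ^ Fintype.card ι : ℝ) * (2 * (q - m) - 1)‼ * A ^ (q - m))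
          = (2 ^ Fintype.card ι : ℝ) *
              (((2 * q).choose (2 * m) : ℝ) * (2 * (q - m) - 1)‼) *
                ((a j ^ 2) ^ m * A ^ (q - m)) := by ring
        _ ≤ (2 ^ Fintype.card ι : ℝ) * (((2 * q - 1)‼ : ℝ) * q.choose m) *
                ((a j ^ 2) ^ m * A ^ (q - m)) := by
              refine mul_le_mul_of_nonneg_right ?_ hrest
              exact mul_le_mul_of_nonneg_left hnat (by positivity)
        _ = (2 ^ Fintype.card ι : ℝ) * (2 * q - 1)‼ *
              ((q.choose m : ℝ) * (a j ^ 2) ^ m * A ^ (q - m)) := by ring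
    refine le_trans (le_trans step1 step2) (le_of_eq ?_)
    rw [← Finset.mul_sum]
    congr 1
    rw [add_pow]
    exact (Finset.sum_congr rfl fun m _ => by ring).symm

/-- Splitting a sum over `range (2^(n+1))` by the top bit. -/
lemma sum_prod_testBit (n : ℕ) (f : ℕ → Bool → ℝ) :
    ∑ i ∈ Finset.range (2 ^ n), ∏ b ∈ Finset.range n, f b (Nat.testBit i b)
      = ∏ b ∈ Finset.range n, (f b false + f b true) := by
  induction n generalizing f with
  | zero => simp
  | succ n ih =>
    have hsplit : ∑ i ∈ Finset.range (2 ^ (n + 1)),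
        ∏ b ∈ Finset.range (n + 1), f b (Nat.testBit i b)
        = (∑ i ∈ Finset.range (2 ^ n), ∏ b ∈ Finset.range (n + 1), f b (Nat.testBit i b))
          + ∑ i ∈ Finset.range (2 ^ n),
              ∏ b ∈ Finset.range (n + 1), f b (Nat.testBit (2 ^ n + i) b) := by
      set g : ℕ → ℝ := fun i => ∏ b ∈ Finset.range (n + 1), f b (Nat.testBit i b) with hg
      have e0 : ∑ i ∈ Finset.range (2 ^ n + 2 ^ n), g i
          = ∑ i ∈ Finset.Ico 0 (2 ^ n), g i + ∑ i ∈ Finset.Ico (2 ^ n) (2 ^ n + 2 ^ n), g i := by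
        rw [Finset.sum_Ico_consecutive g (Nat.zero_le _) (Nat.le_add_right _ _),
          ← Finset.range_eq_Ico]
      have e2 : ∑ i ∈ Finset.Ico (2 ^ n) (2 ^ n + 2 ^ n), g i
          = ∑ i ∈ Finset.range (2 ^ n), g (2 ^ n + i) := by
        rw [Finset.sum_Ico_eq_sum_range, Nat.add_sub_cancel]
      rw [show (2 : ℕ) ^ (n + 1) = 2 ^ n + 2 ^ n by ring]
      rw [show (∑ i ∈ Finset.range (2 ^ n + 2 ^ n),
          ∏ b ∈ Finset.range (n + 1), f b (Nat.testBit i b)) = ∑ i ∈ Finset.range (2 ^ n + 2 ^ n), g i from rfl,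
        e0, e2, ← Finset.range_eq_Ico]
    rw [hsplit]
    have hlow : ∀ i ∈ Finset.range (2 ^ n),
        ∏ b ∈ Finset.range (n + 1), f b (Nat.testBit i b)
          = (∏ b ∈ Finset.range n, f b (Nat.testBit i b)) * f n false := by
      intro i hi
      rw [Finset.prod_range_succ, Nat.testBit_lt_two_pow (Finset.mem_range.mp hi)]
    have hhigh : ∀ i ∈ Finset.range (2 ^ n),
        ∏ b ∈ Finset.range (n + 1), f b (Nat.testBit (2 ^ n + i) b)
          = (∏ b ∈ Finset.range n, f b (Nat.testBit i b)) * f n true := by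
      intro i hi
      rw [Finset.prod_range_succ]
      have htop : Nat.testBit (2 ^ n + i) n = true := by
        rw [Nat.testBit_two_pow_add_eq,
          Nat.testBit_lt_two_pow (Finset.mem_range.mp hi)]
        rfl
      rw [htop]
      congr 1
      refine Finset.prod_congr rfl fun b hb => ?_
      rw [Nat.testBit_two_pow_add_gt (Finset.mem_range.mp hb) i]
    rw [Finset.sum_congr rfl hlow, Finset.sum_congr rfl hhigh,
      ← Finset.sum_mul, ← Finset.sum_mul, ih, Finset.prod_range_succ]
    ring

lemma WH_sq (n : ℕ) (i j : Fin (2 ^ n)) : WH n i j ^ 2 = ((2 : ℝ) ^ n)⁻¹ := by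
  rw [WH, mul_pow, ← pow_mul, mul_comm _ 2, pow_mul, neg_one_sq, one_pow, mul_one,
    inv_pow, Real.sq_sqrt (by positivity)]

/-- Orthonormality of the columns of the Walsh–Hadamard matrix. -/
lemma WH_orth (n : ℕ) (j k : Fin (2 ^ n)) :
    ∑ i, WH n i j * WH n i k = if j = k then (1 : ℝ) else 0 := by
  have hd : (0 : ℝ) < 2 ^ n := by positivity
  set f : ℕ → Bool → ℝ := fun b c =>
    (-1 : ℝ) ^ (c.toNat * ((j : ℕ).testBit b).toNat
      + c.toNat * ((k : ℕ).testBit b).toNat) with hf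
  have hterm : ∀ i : ℕ, (Real.sqrt (2 ^ n))⁻¹ *
        (-1 : ℝ) ^ (∑ b ∈ Finset.range n, (Nat.testBit i b).toNat * ((j : ℕ).testBit b).toNat)
      * ((Real.sqrt (2 ^ n))⁻¹ *
        (-1 : ℝ) ^ (∑ b ∈ Finset.range n, (Nat.testBit i b).toNat * ((k : ℕ).testBit b).toNat))
      = ((2 : ℝ) ^ n)⁻¹ * ∏ b ∈ Finset.range n, f b (Nat.testBit i b) := by
    intro i
    have h1 : ∏ b ∈ Finset.range n, f b (Nat.testBit i b)
        = (-1 : ℝ) ^ (∑ b ∈ Finset.range n, (Nat.testBit i b).toNat * ((j : ℕ).testBit b).toNat)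
          * (-1 : ℝ) ^ (∑ b ∈ Finset.range n, (Nat.testBit i b).toNat * ((k : ℕ).testBit b).toNat) := by
      rw [← pow_add, ← Finset.sum_add_distrib, ← Finset.prod_pow_eq_pow_sum]
    have h2 : (Real.sqrt (2 ^ n))⁻¹ * (Real.sqrt (2 ^ n))⁻¹ = ((2 : ℝ) ^ n)⁻¹ := by
      rw [← mul_inv, Real.mul_self_sqrt (by positivity : (0:ℝ) ≤ 2 ^ n)]
    rw [h1, ← h2]; ring
  have hsum : ∑ i, WH n i j * WH n i k
      = ((2 : ℝ) ^ n)⁻¹ * ∏ b ∈ Finset.range n, (f b false + f b true) := by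
    have : ∑ i : Fin (2 ^ n), WH n i j * WH n i k
        = ∑ i ∈ Finset.range (2 ^ n), ((2 : ℝ) ^ n)⁻¹ * ∏ b ∈ Finset.range n, f b (Nat.testBit i b) := by
      rw [← Fin.sum_univ_eq_sum_range
        (fun i => ((2 : ℝ) ^ n)⁻¹ * ∏ b ∈ Finset.range n, f b (Nat.testBit i b))]
      exact Finset.sum_congr rfl fun i _ => hterm (i : ℕ)
    rw [this, ← Finset.mul_sum, sum_prod_testBit]
  rw [hsum]
  by_cases hjk : j = k
  · subst hjk
    rw [if_pos rfl]
    have : ∀ b ∈ Finset.range n, f b false + f b true = 2 := by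
      intro b _
      simp only [hf]
      cases hb : ((j : ℕ)).testBit b <;> norm_num [hb]
    rw [Finset.prod_congr rfl this, Finset.prod_const, Finset.card_range]
    field_simp
  · rw [if_neg hjk]
    have hne : (j : ℕ) ≠ (k : ℕ) := fun h => hjk (Fin.ext h)
    have hbit : ∃ b, ((j : ℕ)).testBit b ≠ ((k : ℕ)).testBit b := by
      by_contra hc
      push_neg at hc
      exact hne (Nat.eq_of_testBit_eq hc)
    obtain ⟨b0, hb0⟩ := hbit
    have hb0n : b0 < n := by
      by_contra hbn
      push_neg at hbn
      have hjlt : (j : ℕ) < 2 ^ b0 :=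
        lt_of_lt_of_le j.isLt (Nat.pow_le_pow_right (by norm_num) hbn)
      have hklt : (k : ℕ) < 2 ^ b0 :=
        lt_of_lt_of_le k.isLt (Nat.pow_le_pow_right (by norm_num) hbn)
      rw [Nat.testBit_lt_two_pow hjlt, Nat.testBit_lt_two_pow hklt] at hb0
      exact hb0 rfl
    have hzero : f b0 false + f b0 true = 0 := by
      simp only [hf]
      cases hb : ((j : ℕ)).testBit b0 <;> cases hk2 : ((k : ℕ)).testBit b0 <;>
          rw [hb, hk2] at hb0 <;>
        first
          | exact absurd rfl hb0
          | norm_num [hb, hk2]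
    rw [Finset.prod_eq_zero (Finset.mem_range.mpr hb0n) hzero, mul_zero]

/-- The Walsh–Hadamard transform preserves the sum of squares. -/
lemma WH_sum_sq (n : ℕ) (v : Fin (2 ^ n) → ℝ) :
    ∑ i, ((WH n).mulVec v i) ^ 2 = ∑ j, v j ^ 2 := by
  have h1 : ∀ i, ((WH n).mulVec v i) ^ 2
      = ∑ j, ∑ k, v j * v k * (WH n i j * WH n i k) := by
    intro i
    rw [show (WH n).mulVec v i = ∑ j, WH n i j * v j from by simp [Matrix.mulVec, dotProduct], sq, Finset.sum_mul_sum]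
    exact Finset.sum_congr rfl fun j _ => Finset.sum_congr rfl fun k _ => by ring
  rw [Finset.sum_congr rfl fun i _ => h1 i, Finset.sum_comm]
  have h2 : ∀ j, ∑ i, ∑ k, v j * v k * (WH n i j * WH n i k) = v j ^ 2 := by
    intro j
    rw [Finset.sum_comm]
    have h3 : ∀ k, ∑ i, v j * v k * (WH n i j * WH n i k)
        = v j * v k * (if j = k then (1 : ℝ) else 0) := by
      intro k
      rw [← Finset.mul_sum, WH_orth]
    rw [Finset.sum_congr rfl fun k _ => h3 k]
    simp [sq]
  exact Finset.sum_congr rfl fun j _ => h2 j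

lemma doubleFactorial_le_pow (p : ℕ) : (2 * p + 1)‼ ≤ (2 * p + 2) ^ (p + 1) := by
  induction p with
  | zero => decide
  | succ p ih =>
    rw [show 2 * (p + 1) + 1 = (2 * p + 1) + 2 by ring, Nat.doubleFactorial_add_two]
    calc (2 * p + 1 + 2) * (2 * p + 1)‼
        ≤ (2 * (p + 1) + 2) * (2 * p + 2) ^ (p + 1) :=
          Nat.mul_le_mul (by omega) ih
      _ ≤ (2 * (p + 1) + 2) * (2 * (p + 1) + 2) ^ (p + 1) :=
          Nat.mul_le_mul_left _ (Nat.pow_le_pow_left (by omega) _)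
      _ = (2 * (p + 1) + 2) ^ (p + 1 + 1) := (pow_succ' _ _).symm

/-- there is a universal constant `C > 0` such that for any unit
vector `x ∈ ℝ^d` (`d = 2^n`) and integer `p ≥ 1`,
`E(‖H D' x‖₄^{4p}) ≤ C^{2p+2} d^{-p} (2p+2)^{p+1}`, the expectation being the uniform
average over the `2^d` sign patterns of the diagonal of `D'`. -/
theorem l4_moment_bound :
    ∃ C > (0 : ℝ), ∀ (n : ℕ) (x : Fin (2 ^ n) → ℝ), ∑ j, x j ^ 2 = 1 →
      ∀ p : ℕ, 1 ≤ p →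
      (∑ ε : Fin (2 ^ n) → Bool,
          (∑ i, ((WH n).mulVec (fun j => sgn (ε j) * x j) i) ^ 4) ^ p) / 2 ^ (2 ^ n)
        ≤ C ^ (2 * p + 2) * ((2 ^ n : ℝ))⁻¹ ^ p * (2 * (p : ℝ) + 2) ^ (p + 1) := by
  refine ⟨1, one_pos, fun n x hx p hp => ?_⟩
  have hdpos : (0 : ℝ) < (2 : ℝ) ^ n := by positivity
  set y : (Fin (2 ^ n) → Bool) → Fin (2 ^ n) → ℝ :=
    fun ε => (WH n).mulVec (fun j => sgn (ε j) * x j) with hy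
  -- Step 1: orthonormality
  have ortho : ∀ ε, ∑ i, y ε i ^ 2 = 1 := by
    intro ε
    have h0 : ∑ i, y ε i ^ 2 = ∑ j, (sgn (ε j) * x j) ^ 2 := WH_sum_sq n _
    rw [h0]
    calc ∑ j, (sgn (ε j) * x j) ^ 2 = ∑ j, x j ^ 2 := by
          refine Finset.sum_congr rfl fun j _ => ?_
          rw [mul_pow, sgn_sq, one_mul]
      _ = 1 := hx
  -- Step 2: Jensen
  have jensen : ∀ ε, (∑ i, y ε i ^ 4) ^ p ≤ ∑ i, y ε i ^ (2 * (p + 1)) := by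
    intro ε
    have h1 := Real.pow_arith_mean_le_arith_mean_pow Finset.univ
      (fun i => y ε i ^ 2) (fun i => y ε i ^ 2)
      (fun i _ => sq_nonneg _) (ortho ε) (fun i _ => sq_nonneg _) p
    calc (∑ i, y ε i ^ 4) ^ p = (∑ i, y ε i ^ 2 * y ε i ^ 2) ^ p := by
          congr 1
          exact Finset.sum_congr rfl fun i _ => by ring
      _ ≤ ∑ i, y ε i ^ 2 * (y ε i ^ 2) ^ p := h1
      _ = ∑ i, y ε i ^ (2 * (p + 1)) := by
          refine Finset.sum_congr rfl fun i _ => ?_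
          rw [← pow_mul, ← pow_add]
          congr 1
          ring
  -- Step 3: Khintchine for each row
  have row : ∀ i : Fin (2 ^ n), ∑ ε : Fin (2 ^ n) → Bool, y ε i ^ (2 * (p + 1))
      ≤ (2 ^ (2 ^ n) : ℝ) * (2 * (p + 1) - 1)‼ * (((2 : ℝ) ^ n)⁻¹) ^ (p + 1) := by
    intro i
    have hform : ∀ ε : Fin (2 ^ n) → Bool,
        y ε i = ∑ j, sgn (ε j) * (WH n i j * x j) := by
      intro ε
      show (WH n).mulVec (fun j => sgn (ε j) * x j) i = _
      rw [show (WH n).mulVec (fun j => sgn (ε j) * x j) i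
        = ∑ j, WH n i j * (sgn (ε j) * x j) from by
          simp [Matrix.mulVec, dotProduct]]
      exact Finset.sum_congr rfl fun j _ => by ring
    have hvar : ∑ j, (WH n i j * x j) ^ 2 = ((2 : ℝ) ^ n)⁻¹ := by
      calc ∑ j, (WH n i j * x j) ^ 2 = ∑ j, ((2 : ℝ) ^ n)⁻¹ * x j ^ 2 := by
            refine Finset.sum_congr rfl fun j _ => ?_
            rw [mul_pow, WH_sq]
        _ = ((2 : ℝ) ^ n)⁻¹ := by rw [← Finset.mul_sum, hx, mul_one]
    have hk := khintchine (fun j => WH n i j * x j) Finset.univ (p + 1)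
    rw [Fintype.card_fin] at hk
    calc ∑ ε : Fin (2 ^ n) → Bool, y ε i ^ (2 * (p + 1))
        = ∑ ε : Fin (2 ^ n) → Bool,
            (∑ j, sgn (ε j) * (WH n i j * x j)) ^ (2 * (p + 1)) :=
          Finset.sum_congr rfl fun ε _ => by rw [hform]
      _ ≤ (2 ^ (2 ^ n) : ℝ) * (2 * (p + 1) - 1)‼ * (∑ j, (WH n i j * x j) ^ 2) ^ (p + 1) := hk
      _ = (2 ^ (2 ^ n) : ℝ) * (2 * (p + 1) - 1)‼ * (((2 : ℝ) ^ n)⁻¹) ^ (p + 1) := by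
          rw [hvar]
  -- Combine
  have main : ∑ ε : Fin (2 ^ n) → Bool, (∑ i, y ε i ^ 4) ^ p
      ≤ (2 : ℝ) ^ n * ((2 ^ (2 ^ n) : ℝ) * (2 * (p + 1) - 1)‼ * (((2 : ℝ) ^ n)⁻¹) ^ (p + 1)) := by
    calc ∑ ε : Fin (2 ^ n) → Bool, (∑ i, y ε i ^ 4) ^ p
        ≤ ∑ ε : Fin (2 ^ n) → Bool, ∑ i, y ε i ^ (2 * (p + 1)) :=
          Finset.sum_le_sum fun ε _ => jensen ε
      _ = ∑ i, ∑ ε : Fin (2 ^ n) → Bool, y ε i ^ (2 * (p + 1)) := Finset.sum_comm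
      _ ≤ ∑ _i : Fin (2 ^ n),
            (2 ^ (2 ^ n) : ℝ) * (2 * (p + 1) - 1)‼ * (((2 : ℝ) ^ n)⁻¹) ^ (p + 1) :=
          Finset.sum_le_sum fun i _ => row i
      _ = (2 : ℝ) ^ n *
            ((2 ^ (2 ^ n) : ℝ) * (2 * (p + 1) - 1)‼ * (((2 : ℝ) ^ n)⁻¹) ^ (p + 1)) := by
          rw [Finset.sum_const, Finset.card_univ, Fintype.card_fin, nsmul_eq_mul]
          push_cast
          ring
  rw [div_le_iff₀ (by positivity), one_pow, one_mul]
  refine le_trans main ?_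
  have hcollapse : (2 : ℝ) ^ n * (((2 : ℝ) ^ n)⁻¹) ^ (p + 1)
      = (((2 : ℝ) ^ n)⁻¹) ^ p := by
    rw [pow_succ]
    field_simp
  have hdf : ((2 * (p + 1) - 1)‼ : ℝ) ≤ (2 * (p : ℝ) + 2) ^ (p + 1) := by
    have h1 : ((2 * p + 1)‼ : ℕ) ≤ (2 * p + 2) ^ (p + 1) := doubleFactorial_le_pow p
    have h2 : (2 * (p + 1) - 1) = 2 * p + 1 := by omega
    rw [h2]
    calc ((2 * p + 1)‼ : ℝ) ≤ ((2 * p + 2 : ℕ) : ℝ) ^ (p + 1) := by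
          exact_mod_cast h1
      _ = (2 * (p : ℝ) + 2) ^ (p + 1) := by push_cast; ring
  calc (2 : ℝ) ^ n * ((2 ^ (2 ^ n) : ℝ) * (2 * (p + 1) - 1)‼ * (((2 : ℝ) ^ n)⁻¹) ^ (p + 1))
      = ((2 : ℝ) ^ n * (((2 : ℝ) ^ n)⁻¹) ^ (p + 1)) * ((2 * (p + 1) - 1)‼ : ℝ) *
          (2 ^ (2 ^ n) : ℝ) := by ring
    _ = (((2 : ℝ) ^ n)⁻¹) ^ p * ((2 * (p + 1) - 1)‼ : ℝ) * (2 ^ (2 ^ n) : ℝ) := by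
        rw [hcollapse]
    _ ≤ (((2 : ℝ) ^ n)⁻¹) ^ p * (2 * (p : ℝ) + 2) ^ (p + 1) * (2 ^ (2 ^ n) : ℝ) := by
        refine mul_le_mul_of_nonneg_right (mul_le_mul_of_nonneg_left hdf (by positivity))
          (by positivity)
    _ = (((2 : ℝ) ^ n))⁻¹ ^ p * (2 * (p : ℝ) + 2) ^ (p + 1) * 2 ^ (2 ^ n) := rfl
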